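/- Let Λ be a hereditary artin algebra, T a rigid module with Bongartz complement B (so T ⊕ B is the Bongartz completion to a tilting module). If M is any module with Ext^1(T,M) = 0, then Ext^1(B,M) = 0 and M is generated by T ⊕ B (i.e., M is a quotient of a finite direct sum of copies of T ⊕ B). -/
import Mathlib


/-- `X` is (isomorphic to) a direct summand of `M`. -/
def IsSummand (Λ : Type) [Ring Λ] (X M : Type) [AddCommGroup X] [Module Λ X]
    [AddCommGroup M] [Module Λ M] : Prop :=
  ∃ (i : X →ₗ[Λ] M) (p : M →ₗ[Λ] X), p ∘ₗ i = LinearMap.id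

/-- `X` belongs to `add T`, the additive subcategory generated by the
indecomposable direct summands of `T`. -/
def InAdd (Λ : Type) [Ring Λ] (T X : Type) [AddCommGroup T] [Module Λ T]
    [AddCommGroup X] [Module Λ X] : Prop :=
  ∃ n : ℕ, IsSummand Λ X (Fin n → T)

/-- `Ext¹_Λ(A, B) = 0`: every short exact sequence `0 → B → E → A → 0` splits. -/
def Ext1Zero (Λ : Type) [Ring Λ] (A B : Type) [AddCommGroup A] [Module Λ A]
    [AddCommGroup B] [Module Λ B] : Prop :=
  ∀ (E : Type) [AddCommGroup E] [Module Λ E] (i : B →ₗ[Λ] E) (p : E →ₗ[Λ] A),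
    Function.Injective i → Function.Surjective p → LinearMap.ker p = LinearMap.range i →
    ∃ r : E →ₗ[Λ] B, r ∘ₗ i = LinearMap.id

/-- An indecomposable module: nonzero, and admitting no nontrivial direct sum
decomposition. -/
def IsIndec (Λ : Type) [Ring Λ] (M : Type) [AddCommGroup M] [Module Λ M] : Prop :=
  (∃ m : M, m ≠ 0) ∧ ∀ N N' : Submodule Λ M, IsCompl N N' → N = ⊥ ∨ N' = ⊥

/-- A hereditary ring: submodules of projective modules are projective. -/
def IsHereditaryRing (Λ : Type) [Ring Λ] : Prop :=
  ∀ (M : Type) [AddCommGroup M] [Module Λ M], Module.Projective Λ M →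
    ∀ N : Submodule Λ M, Module.Projective Λ N

section Helpers
variable (Λ : Type) [Ring Λ]

theorem pushout_split (K F B M : Type) [AddCommGroup K] [Module Λ K]
    [AddCommGroup F] [Module Λ F] [AddCommGroup B] [Module Λ B]
    [AddCommGroup M] [Module Λ M]
    (u : K →ₗ[Λ] F) (v : F →ₗ[Λ] B) (hu : Function.Injective u)
    (hv : Function.Surjective v) (hker : LinearMap.ker v = LinearMap.range u)
    (r : K →ₗ[Λ] M) (hB : Ext1Zero Λ B M) :
    ∃ r' : F →ₗ[Λ] M, r' ∘ₗ u = r := by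
  set S : Submodule Λ (M × F) := LinearMap.range (LinearMap.prod r (-u)) with hSdef
  have memS : ∀ m : M, ∀ f : F, ((m, f) ∈ S ↔ ∃ k, r k = m ∧ -(u k) = f) := by
    intro m f
    constructor
    · rintro ⟨k, hk⟩
      rw [Prod.ext_iff] at hk
      exact ⟨k, hk.1, hk.2⟩
    · rintro ⟨k, h1, h2⟩
      exact ⟨k, Prod.ext h1 h2⟩
  let mkq : (M × F) →ₗ[Λ] (M × F) ⧸ S := S.mkQ
  let iP : M →ₗ[Λ] (M × F) ⧸ S := mkq ∘ₗ LinearMap.inl Λ M F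
  have hS : S ≤ LinearMap.ker (v ∘ₗ LinearMap.snd Λ M F) := by
    rintro ⟨m, f⟩ hx
    obtain ⟨k, _, h2⟩ := (memS m f).1 hx
    have hku : u k ∈ LinearMap.ker v := hker ▸ ⟨k, rfl⟩
    rw [LinearMap.mem_ker] at hku ⊢
    simp only [LinearMap.comp_apply, LinearMap.snd_apply, ← h2, map_neg, hku, neg_zero]
  let pP : (M × F) ⧸ S →ₗ[Λ] B := S.liftQ (v ∘ₗ LinearMap.snd Λ M F) hS
  have hiP : Function.Injective iP := by
    intro m m' h
    have hmem : ((m, (0:F)) : M × F) - (m', 0) ∈ S := (Submodule.Quotient.eq S).mp h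
    obtain ⟨k, h1, h2⟩ := (memS (m - m') 0).1 (by simpa using hmem)
    have hk0 : k = 0 := hu (by simpa using neg_eq_zero.mp h2)
    rw [hk0, map_zero] at h1
    exact sub_eq_zero.mp h1.symm
  have hpP : Function.Surjective pP := by
    intro b
    obtain ⟨f, hf⟩ := hv b
    exact ⟨mkq (0, f), hf⟩
  have hkerP : LinearMap.ker pP = LinearMap.range iP := by
    ext x
    constructor
    · intro hx
      obtain ⟨⟨m, f⟩, rfl⟩ := S.mkQ_surjective x
      have hvf : v f = 0 := hx
      have : f ∈ LinearMap.range u := hker ▸ hvf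
      obtain ⟨k, rfl⟩ := this
      refine ⟨m + r k, ?_⟩
      show Submodule.Quotient.mk (m + r k, 0) = Submodule.Quotient.mk (m, u k)
      rw [Submodule.Quotient.eq]
      exact (memS _ _).2 ⟨k, by simp, by simp⟩
    · rintro ⟨m, rfl⟩
      show v (0 : F) = 0
      simp
  obtain ⟨s, hs⟩ := hB ((M × F) ⧸ S) iP pP hiP hpP hkerP
  refine ⟨s ∘ₗ mkq ∘ₗ LinearMap.inr Λ M F, ?_⟩
  ext k
  have hmk : mkq (0, u k) = iP (r k) := by
    show Submodule.Quotient.mk (0, u k) = Submodule.Quotient.mk (r k, 0)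
    rw [Submodule.Quotient.eq]
    exact (memS _ _).2 ⟨-k, by simp, by simp⟩
  simp only [LinearMap.comp_apply, LinearMap.inr_apply, LinearMap.id_apply]
  rw [hmk]
  exact LinearMap.congr_fun hs (r k)

end Helpers

section More
variable (Λ : Type) [Ring Λ]

theorem ext1Zero_of_summand (A A' M : Type) [AddCommGroup A] [Module Λ A]
    [AddCommGroup A'] [Module Λ A'] [AddCommGroup M] [Module Λ M]
    (ι : A →ₗ[Λ] A') (ρ : A' →ₗ[Λ] A) (hρι : ρ ∘ₗ ι = LinearMap.id)
    (h : Ext1Zero Λ A' M) : Ext1Zero Λ A M := by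
  intro F _ _ iF q hiF hq hker
  have hqiF : ∀ m, q (iF m) = 0 := fun m => by
    have : iF m ∈ LinearMap.ker q := hker ▸ ⟨m, rfl⟩
    exact this
  set G : Submodule Λ (A' × F) :=
    LinearMap.ker (q ∘ₗ LinearMap.snd Λ A' F - ρ ∘ₗ LinearMap.fst Λ A' F) with hGdef
  have memG : ∀ x : A' × F, x ∈ G ↔ q x.2 = ρ x.1 := by
    intro x
    rw [hGdef, LinearMap.mem_ker, LinearMap.sub_apply, sub_eq_zero]
    rfl
  let iG : M →ₗ[Λ] G :=
    LinearMap.codRestrict G (LinearMap.prod 0 iF) (fun m => (memG _).2 (by simp [hqiF]))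
  let pG : G →ₗ[Λ] A' := LinearMap.fst Λ A' F ∘ₗ G.subtype
  have hiG : Function.Injective iG := by
    intro m m' hmm
    have : iF m = iF m' := congrArg (fun x : G => (x : A' × F).2) hmm
    exact hiF this
  have hpG : Function.Surjective pG := by
    intro x
    obtain ⟨f, hf⟩ := hq (ρ x)
    exact ⟨⟨(x, f), (memG _).2 hf⟩, rfl⟩
  have hkerG : LinearMap.ker pG = LinearMap.range iG := by
    ext g
    constructor
    · intro hg
      have h1 : (g : A' × F).1 = 0 := hg
      have h2 : q (g : A' × F).2 = 0 := by
        rw [(memG _).1 g.2, h1, map_zero]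
      obtain ⟨m, hm⟩ := (hker ▸ h2 : (g : A' × F).2 ∈ LinearMap.range iF)
      exact ⟨m, Subtype.ext (Prod.ext (by simp [iG, h1]) (by simp [iG, hm]))⟩
    · rintro ⟨m, rfl⟩
      show ((0 : A'), iF m).1 = 0
      rfl
  obtain ⟨r, hr⟩ := h G iG pG hiG hpG hkerG
  refine ⟨r ∘ₗ LinearMap.codRestrict G (LinearMap.prod (ι ∘ₗ q) LinearMap.id)
    (fun f => (memG _).2 (by exact (LinearMap.congr_fun hρι (q f)).symm)), ?_⟩
  ext m
  have : (LinearMap.codRestrict G (LinearMap.prod (ι ∘ₗ q) LinearMap.id)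
      (fun f => (memG _).2 (by exact (LinearMap.congr_fun hρι (q f)).symm))) (iF m) = iG m := by
    apply Subtype.ext
    apply Prod.ext
    · show ι (q (iF m)) = 0
      rw [hqiF, map_zero]
    · rfl
  simp only [LinearMap.comp_apply, LinearMap.id_apply, this]
  exact LinearMap.congr_fun hr m

end More

section More2
variable (Λ : Type) [Ring Λ]

theorem ext1Zero_prod (A B M : Type) [AddCommGroup A] [Module Λ A]
    [AddCommGroup B] [Module Λ B] [AddCommGroup M] [Module Λ M]
    (hA : Ext1Zero Λ A M) (hB : Ext1Zero Λ B M) : Ext1Zero Λ (A × B) M := by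
  intro F _ _ iF q hiF hq hker
  have hqiF : ∀ m, q (iF m) = 0 := fun m => by
    have : iF m ∈ LinearMap.ker q := hker ▸ ⟨m, rfl⟩
    exact this
  set qB : F →ₗ[Λ] B := LinearMap.snd Λ A B ∘ₗ q with hqBdef
  set K : Submodule Λ F := LinearMap.ker qB with hKdef
  let iK : M →ₗ[Λ] K := LinearMap.codRestrict K iF
    (fun m => by show qB (iF m) = 0; simp [hqBdef, hqiF])
  let pK : K →ₗ[Λ] A := LinearMap.fst Λ A B ∘ₗ q ∘ₗ K.subtype
  have hiK : Function.Injective iK := fun m m' h =>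
    hiF (congrArg (fun x : K => (x : F)) h)
  have hpK : Function.Surjective pK := by
    intro a
    obtain ⟨f, hf⟩ := hq (a, 0)
    refine ⟨⟨f, by show qB f = 0; simp [hqBdef, hf]⟩, by show (q f).1 = a; rw [hf]⟩
  have hkerK : LinearMap.ker pK = LinearMap.range iK := by
    ext x
    constructor
    · intro hx
      have h1 : (q (x : F)).1 = 0 := hx
      have h2 : (q (x : F)).2 = 0 := x.2
      have hq0 : q (x : F) = 0 := Prod.ext h1 h2
      obtain ⟨m, hm⟩ := (hker ▸ hq0 : (x : F) ∈ LinearMap.range iF)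
      exact ⟨m, Subtype.ext hm⟩
    · rintro ⟨m, rfl⟩
      show (q (iF m)).1 = 0
      rw [hqiF]; rfl
  obtain ⟨rK, hrK⟩ := hA K iK pK hiK hpK hkerK
  have hqBsurj : Function.Surjective qB := by
    intro b
    obtain ⟨f, hf⟩ := hq (0, b)
    exact ⟨f, by show (q f).2 = b; rw [hf]⟩
  obtain ⟨r', hr'⟩ := pushout_split Λ K F B M K.subtype qB K.injective_subtype hqBsurj
    (by rw [Submodule.range_subtype]) rK hB
  refine ⟨r', ?_⟩
  ext m
  have : r' (iF m) = r' (K.subtype (iK m)) := rfl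
  rw [LinearMap.comp_apply, LinearMap.id_apply, this, ← LinearMap.comp_apply, hr']
  exact LinearMap.congr_fun hrK m

theorem ext1Zero_pi (A M : Type) [AddCommGroup A] [Module Λ A]
    [AddCommGroup M] [Module Λ M] (h : Ext1Zero Λ A M) :
    ∀ n : ℕ, Ext1Zero Λ (Fin n → A) M := by
  intro n
  induction n with
  | zero =>
    intro F _ _ iF q hiF hq hker
    have hq0 : ∀ f : F, q f = 0 := fun f => Subsingleton.elim _ _
    have hsurj : Function.Surjective iF := by
      intro f
      have : f ∈ LinearMap.range iF := hker ▸ (hq0 f : q f = 0)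
      exact this
    let e := LinearEquiv.ofBijective iF ⟨hiF, hsurj⟩
    exact ⟨e.symm.toLinearMap, by ext m; exact e.symm_apply_apply m⟩
  | succ n ih =>
    have hprod := ext1Zero_prod Λ A (Fin n → A) M h ih
    refine ext1Zero_of_summand Λ (Fin (n+1) → A) (A × (Fin n → A)) M
      (LinearMap.prod (LinearMap.proj 0) (LinearMap.pi fun k => LinearMap.proj k.succ))
      (LinearMap.pi fun j => Fin.cases (LinearMap.fst Λ A (Fin n → A))
        (fun k => LinearMap.proj k ∘ₗ LinearMap.snd Λ A (Fin n → A)) j) ?_ hprod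
    apply LinearMap.ext
    intro f
    funext j
    induction j using Fin.cases with
    | zero => simp [LinearMap.pi_apply]
    | succ k => simp [LinearMap.pi_apply]

theorem ext1Zero_of_inAdd' (A X M : Type) [AddCommGroup A] [Module Λ A]
    [AddCommGroup X] [Module Λ X] [AddCommGroup M] [Module Λ M]
    (n : ℕ) (ι : X →ₗ[Λ] (Fin n → A)) (ρ : (Fin n → A) →ₗ[Λ] X)
    (hρι : ρ ∘ₗ ι = LinearMap.id) (h : Ext1Zero Λ A M) : Ext1Zero Λ X M :=
  ext1Zero_of_summand Λ X (Fin n → A) M ι ρ hρι (ext1Zero_pi Λ A M h n)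

end More2


/-- Let `T` be rigid over a hereditary artin algebra with Bongartz complement
`B` (so `B ∈ add E` and `E ∈ add(T ⊕ B)` for the universal `add T`-coextension
`0 → Λ → E → T' → 0` of `Λ`).  If `Ext¹(T, M) = 0` then `Ext¹(B, M) = 0` and
`M` is generated by `T ⊕ B`. -/
theorem bongartz_complement_generates (Λ : Type) [Ring Λ] [IsArtinianRing Λ]
    (hH : IsHereditaryRing Λ)
    (T E T' B M : Type) [AddCommGroup T] [Module Λ T] [AddCommGroup E] [Module Λ E]
    [AddCommGroup T'] [Module Λ T'] [AddCommGroup B] [Module Λ B]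
    [AddCommGroup M] [Module Λ M]
    (hTfl : IsFiniteLength Λ T) (hMfl : IsFiniteLength Λ M)
    (hrigid : Ext1Zero Λ T T) (hT' : InAdd Λ T T')
    (i : Λ →ₗ[Λ] E) (p : E →ₗ[Λ] T')
    (hi : Function.Injective i) (hp : Function.Surjective p)
    (hexact : LinearMap.ker p = LinearMap.range i)
    (huniv : ∀ (F : Type) [AddCommGroup F] [Module Λ F] (j : Λ →ₗ[Λ] F) (q : F →ₗ[Λ] T),
      Function.Injective j → Function.Surjective q → LinearMap.ker q = LinearMap.range j →
      ∃ (h : T →ₗ[Λ] T') (φ : F →ₗ[Λ] E), φ ∘ₗ j = i ∧ p ∘ₗ φ = h ∘ₗ q)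
    (hB1 : InAdd Λ E B) (hB2 : InAdd Λ (T × B) E)
    (hM : Ext1Zero Λ T M) :
    Ext1Zero Λ B M ∧
    ∃ (k : ℕ) (q : (Fin k → T × B) →ₗ[Λ] M), Function.Surjective q := by
  -- Ext¹(T', M) = 0 since T' ∈ add T
  have hT'M : Ext1Zero Λ T' M := by
    obtain ⟨n, ι, ρ, hρι⟩ := hT'
    exact ext1Zero_of_inAdd' Λ T T' M n ι ρ hρι hM
  -- Ext¹(E, M) = 0
  have hEM : Ext1Zero Λ E M := by
    intro F _ _ iF q hiF hq hker
    have hqiF : ∀ m, q (iF m) = 0 := fun m => by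
      have : iF m ∈ LinearMap.ker q := hker ▸ ⟨m, rfl⟩
      exact this
    obtain ⟨f₀, hf₀⟩ := hq (i 1)
    set j : Λ →ₗ[Λ] F := LinearMap.toSpanSingleton Λ F f₀ with hj
    have hqj : ∀ a : Λ, q (j a) = i a := by
      intro a
      have hcomp : q ∘ₗ j = i := LinearMap.ext_ring
        (by simp [hj, LinearMap.toSpanSingleton_apply, hf₀])
      exact LinearMap.congr_fun hcomp a
    set N : Submodule Λ F := LinearMap.ker (p ∘ₗ q) with hN
    let iN : M →ₗ[Λ] N := LinearMap.codRestrict N iF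
      (fun m => by show p (q (iF m)) = 0; rw [hqiF]; simp)
    have hqN : ∀ x : N, q (x : F) ∈ LinearMap.range i := fun x =>
      hexact ▸ (x.2 : p (q (x : F)) = 0)
    let eI := LinearEquiv.ofInjective i hi
    let vN : N →ₗ[Λ] Λ := eI.symm.toLinearMap ∘ₗ
      LinearMap.codRestrict (LinearMap.range i) (q ∘ₗ N.subtype) hqN
    have hivN : ∀ x : N, i (vN x) = q (x : F) := by
      intro x
      have h1 : (eI (eI.symm ⟨q (x : F), hqN x⟩) : E) = q (x : F) := by
        rw [eI.apply_symm_apply]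
      rw [← h1, LinearEquiv.ofInjective_apply]
      rfl
    have hvNsurj : Function.Surjective vN := by
      intro a
      obtain ⟨f, hf⟩ := hq (i a)
      have hfN : f ∈ N := by
        show p (q f) = 0
        rw [hf]
        have : i a ∈ LinearMap.ker p := hexact ▸ ⟨a, rfl⟩
        exact this
      refine ⟨⟨f, hfN⟩, hi ?_⟩
      rw [hivN]; exact hf
    have hiNinj : Function.Injective iN := fun m m' h =>
      hiF (congrArg (fun x : N => (x : F)) h)
    have hkerv : ∀ x : N, vN x = 0 → x ∈ LinearMap.range iN := by
      intro x hx
      have : q (x : F) = 0 := by rw [← hivN, hx, map_zero]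
      obtain ⟨m, hm⟩ := (hker ▸ this : (x : F) ∈ LinearMap.range iF)
      exact ⟨m, Subtype.ext hm⟩
    obtain ⟨x₁, hx₁⟩ := hvNsurj 1
    set t : Λ →ₗ[Λ] N := LinearMap.toSpanSingleton Λ N x₁ with ht
    have hvt : ∀ a : Λ, vN (t a) = a := by
      intro a
      rw [ht, LinearMap.toSpanSingleton_apply, map_smul, hx₁, smul_eq_mul, mul_one]
    set w : N →ₗ[Λ] N := LinearMap.id - t ∘ₗ vN with hw
    have hwmem : ∀ x : N, w x ∈ LinearMap.range iN := by
      intro x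
      apply hkerv
      rw [hw]
      simp only [LinearMap.sub_apply, LinearMap.id_apply, LinearMap.comp_apply, map_sub, hvt]
      exact sub_self _
    let eN := LinearEquiv.ofInjective iN hiNinj
    let rN : N →ₗ[Λ] M := eN.symm.toLinearMap ∘ₗ
      LinearMap.codRestrict (LinearMap.range iN) w hwmem
    have hvNiN : ∀ m, vN (iN m) = 0 := by
      intro m
      apply hi
      rw [hivN, map_zero]
      exact hqiF m
    have hrNiN : ∀ m, rN (iN m) = m := by
      intro m
      have hwiN : w (iN m) = iN m := by
        rw [hw]
        simp only [LinearMap.sub_apply, LinearMap.id_apply, LinearMap.comp_apply, hvNiN,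
          map_zero, sub_zero]
      show eN.symm ⟨w (iN m), hwmem (iN m)⟩ = m
      have : (⟨w (iN m), hwmem (iN m)⟩ : LinearMap.range iN) = eN m := by
        apply Subtype.ext
        show w (iN m) = ((eN m : LinearMap.range iN) : ↥N)
        rw [hwiN]
        exact (LinearEquiv.ofInjective_apply iN m).symm
      rw [this, eN.symm_apply_apply]
    have hpqsurj : Function.Surjective (p ∘ₗ q) := by
      intro t'
      obtain ⟨e, he⟩ := hp t'
      obtain ⟨f, hf⟩ := hq e
      exact ⟨f, by simp [LinearMap.comp_apply, hf, he]⟩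
    obtain ⟨r', hr'⟩ := pushout_split Λ N F T' M N.subtype (p ∘ₗ q) N.injective_subtype
      hpqsurj (by rw [Submodule.range_subtype]) rN hT'M
    refine ⟨r', ?_⟩
    ext m
    have : r' (iF m) = r' (N.subtype (iN m)) := rfl
    rw [LinearMap.comp_apply, LinearMap.id_apply, this, ← LinearMap.comp_apply, hr']
    exact hrNiN m
  -- Ext¹(B, M) = 0 since B ∈ add E
  have hBM : Ext1Zero Λ B M := by
    obtain ⟨n, ι, ρ, hρι⟩ := hB1
    exact ext1Zero_of_inAdd' Λ E B M n ι ρ hρι hEM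
  refine ⟨hBM, ?_⟩
  -- M is finitely generated
  haveI : IsNoetherian Λ M := (isFiniteLength_iff_isNoetherian_isArtinian.mp hMfl).1
  haveI : Module.Finite Λ M := ⟨IsNoetherian.noetherian ⊤⟩
  obtain ⟨n, π, hπ⟩ := Module.Finite.exists_fin' Λ M
  -- the n-fold universal sequence
  set iE : (Fin n → Λ) →ₗ[Λ] (Fin n → E) := LinearMap.pi (fun k => i ∘ₗ LinearMap.proj k)
    with hiE
  set pE : (Fin n → E) →ₗ[Λ] (Fin n → T') := LinearMap.pi (fun k => p ∘ₗ LinearMap.proj k)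
    with hpE
  have hiEapp : ∀ (a : Fin n → Λ) (k : Fin n), iE a k = i (a k) := fun a k => rfl
  have hpEapp : ∀ (e : Fin n → E) (k : Fin n), pE e k = p (e k) := fun e k => rfl
  have hiEinj : Function.Injective iE := by
    intro a a' h
    funext k
    exact hi (congrFun h k)
  have hpEsurj : Function.Surjective pE := by
    intro t'
    choose e he using fun k => hp (t' k)
    exact ⟨e, funext he⟩
  have hkerE : LinearMap.ker pE = LinearMap.range iE := by
    ext f
    constructor
    · intro hf
      have : ∀ k, f k ∈ LinearMap.range i := by
        intro k
        have : p (f k) = 0 := congrFun (show pE f = 0 from hf) k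
        exact hexact ▸ this
      choose a ha using this
      exact ⟨a, funext ha⟩
    · rintro ⟨a, rfl⟩
      show pE (iE a) = 0
      funext k
      have : i (a k) ∈ LinearMap.ker p := hexact ▸ ⟨a k, rfl⟩
      exact this
  obtain ⟨g, hg⟩ := pushout_split Λ (Fin n → Λ) (Fin n → E) (Fin n → T') M iE pE hiEinj
    hpEsurj hkerE π (ext1Zero_pi Λ T' M hT'M n)
  have hgsurj : Function.Surjective g := by
    intro m
    obtain ⟨a, ha⟩ := hπ m
    exact ⟨iE a, by rw [← LinearMap.comp_apply, hg]; exact ha⟩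
  obtain ⟨mm, ι, ρ, hρι⟩ := hB2
  set h : (Fin (mm * n) → T × B) →ₗ[Λ] (Fin n → E) :=
    LinearMap.pi (fun k => ρ ∘ₗ LinearMap.funLeft Λ (T × B)
      (fun j : Fin mm => finProdFinEquiv (j, k))) with hh
  have hhsurj : Function.Surjective h := by
    intro e
    refine ⟨fun t => ι (e (finProdFinEquiv.symm t).2) (finProdFinEquiv.symm t).1, ?_⟩
    funext k
    show ρ (fun j : Fin mm =>
      ι (e (finProdFinEquiv.symm (finProdFinEquiv (j, k))).2)
        (finProdFinEquiv.symm (finProdFinEquiv (j, k))).1) = e k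
    have : (fun j : Fin mm =>
        ι (e (finProdFinEquiv.symm (finProdFinEquiv (j, k))).2)
          (finProdFinEquiv.symm (finProdFinEquiv (j, k))).1) = ι (e k) := by
      funext jj
      rw [Equiv.symm_apply_apply]
    rw [this]
    exact LinearMap.congr_fun hρι (e k)
  exact ⟨mm * n, g ∘ₗ h, hgsurj.comp hhsurj⟩
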